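/- Let μ ∈ ℝ, σ > 0 and c < d. Define the truncated-Gaussian CDF F(x) = (Φ((x−μ)/σ) − Φ((c−μ)/σ)) / (Φ((d−μ)/σ) − Φ((c−μ)/σ)). Then the pushforward under F of the conditional measure (gaussianReal μ σ²)[·| [c,d]] equals the Lebesgue measure restricted to [0,1]; that is, if Z has the N(μ,σ²) distribution truncated to [c,d], then F(Z) is uniformly distributed on [0,1]. -/

import Mathlib

open MeasureTheory ProbabilityTheory

/-- The standard normal CDF `Φ`. -/
noncomputable def stdNormalCDF (t : ℝ) : ℝ := ((gaussianReal 0 1) (Set.Iic t)).toReal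


lemma stdNormalCDF_nonneg (t : ℝ) : 0 ≤ stdNormalCDF t := ENNReal.toReal_nonneg

lemma stdNormalCDF_eq_integral (t : ℝ) :
    stdNormalCDF t = ∫ x in Set.Iic t, gaussianPDFReal 0 1 x := by
  rw [stdNormalCDF, gaussianReal_apply_eq_integral 0 one_ne_zero,
    ENNReal.toReal_ofReal]
  exact setIntegral_nonneg measurableSet_Iic fun x _ => gaussianPDFReal_nonneg 0 1 x

lemma stdNormalCDF_sub (a b : ℝ) :
    stdNormalCDF b - stdNormalCDF a = ∫ x in a..b, gaussianPDFReal 0 1 x := by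
  rw [stdNormalCDF_eq_integral, stdNormalCDF_eq_integral]
  exact intervalIntegral.integral_Iic_sub_Iic ((integrable_gaussianPDFReal 0 1).integrableOn)
    ((integrable_gaussianPDFReal 0 1).integrableOn)

lemma continuous_stdNormalCDF : Continuous stdNormalCDF := by
  have h : stdNormalCDF = fun t => stdNormalCDF 0 + ∫ x in (0:ℝ)..t, gaussianPDFReal 0 1 x := by
    funext t
    rw [← stdNormalCDF_sub]; ring
  rw [h]
  exact continuous_const.add ((integrable_gaussianPDFReal 0 1).continuous_primitive 0)

lemma strictMono_stdNormalCDF : StrictMono stdNormalCDF := by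
  intro a b hab
  have := intervalIntegral.intervalIntegral_pos_of_pos (f := gaussianPDFReal 0 1) (a := a) (b := b)
    ((integrable_gaussianPDFReal 0 1).intervalIntegrable)
    (fun x => gaussianPDFReal_pos 0 1 x one_ne_zero) hab
  rw [← stdNormalCDF_sub] at this
  linarith

lemma ofReal_stdNormalCDF (t : ℝ) :
    ENNReal.ofReal (stdNormalCDF t) = (gaussianReal 0 1) (Set.Iic t) := by
  rw [stdNormalCDF, ENNReal.ofReal_toReal (measure_ne_top _ _)]

lemma gaussianReal_Iic (μ σ : ℝ) (hσ : 0 < σ) (x : ℝ) :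
    (gaussianReal μ (σ ^ 2).toNNReal) (Set.Iic x)
      = ENNReal.ofReal (stdNormalCDF ((x - μ) / σ)) := by
  have hmap : gaussianReal μ (σ ^ 2).toNNReal
      = ((gaussianReal 0 1).map (σ * ·)).map (· + μ) := by
    rw [gaussianReal_map_const_mul, gaussianReal_map_add_const]
    have h0 : σ * (0:ℝ) + μ = μ := by ring
    have h1 : (⟨σ^2, sq_nonneg _⟩ : NNReal) * 1 = (σ ^ 2).toNNReal := by
      ext
      simp [Real.toNNReal, max_eq_left (sq_nonneg σ)]
    rw [h0]; exact congrArg (gaussianReal μ) h1.symm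
  rw [hmap, Measure.map_apply (measurable_add_const μ) measurableSet_Iic]
  have h1 : (· + μ) ⁻¹' (Set.Iic x) = Set.Iic (x - μ) := by
    ext y; simp [le_sub_iff_add_le]
  rw [h1, Measure.map_apply (measurable_const_mul σ) measurableSet_Iic]
  have h2 : (σ * ·) ⁻¹' (Set.Iic (x - μ)) = Set.Iic ((x - μ) / σ) := by
    ext y; simp [le_div_iff₀ hσ, mul_comm]
  rw [h2, ofReal_stdNormalCDF]

lemma gaussianReal_Icc (μ σ : ℝ) (hσ : 0 < σ) {a b : ℝ} (hab : a ≤ b) :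
    (gaussianReal μ (σ ^ 2).toNNReal) (Set.Icc a b)
      = ENNReal.ofReal (stdNormalCDF ((b - μ) / σ) - stdNormalCDF ((a - μ) / σ)) := by
  set P := gaussianReal μ (σ ^ 2).toNNReal with hP
  have hv : (σ ^ 2).toNNReal ≠ 0 := by
    simp [Real.toNNReal_eq_zero, not_le, pow_pos hσ, hσ.ne']
  have hsing : P {a} = 0 := by
    refine gaussianReal_absolutelyContinuous μ hv ?_
    simp [Measure.restrict_apply]
  have hIio : P (Set.Iio a) = P (Set.Iic a) := by
    rw [← Set.Iic_diff_right, measure_diff_null hsing]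
  have hdiff : Set.Icc a b = Set.Iic b \ Set.Iio a := by
    ext y; simp [Set.mem_diff, not_lt, and_comm]
  have hsub : Set.Iio a ⊆ Set.Iic b := fun y hy => le_trans (le_of_lt hy) hab
  have hmd := measure_diff (μ := P) hsub measurableSet_Iio.nullMeasurableSet (measure_ne_top _ _)
  rw [hdiff, hmd, hIio, gaussianReal_Iic μ σ hσ, gaussianReal_Iic μ σ hσ]
  exact (ENNReal.ofReal_sub _ (stdNormalCDF_nonneg _)).symm

/-- The truncated-Gaussian CDF transform: if `Z ~ N(μ,σ²)` truncated to `[c,d]` and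
`F(x) = (Φ((x−μ)/σ) − Φ((c−μ)/σ))/(Φ((d−μ)/σ) − Φ((c−μ)/σ))`, then `F(Z) ~ U(0,1)`. -/
theorem truncated_gaussian_cdf_uniform (μ σ c d : ℝ) (hσ : 0 < σ) (hcd : c < d)
    (F : ℝ → ℝ)
    (hF : F = fun x =>
      (stdNormalCDF ((x - μ) / σ) - stdNormalCDF ((c - μ) / σ)) /
      (stdNormalCDF ((d - μ) / σ) - stdNormalCDF ((c - μ) / σ))) :
    Measure.map F ((gaussianReal μ (σ ^ 2).toNNReal)[|Set.Icc c d])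
      = volume.restrict (Set.Icc (0 : ℝ) 1) := by
  set P := gaussianReal μ (σ ^ 2).toNNReal with hP
  set g : ℝ → ℝ := fun x => stdNormalCDF ((x - μ) / σ) with hg
  have hgmono : StrictMono g := fun a b hab =>
    strictMono_stdNormalCDF (div_lt_div_of_pos_right (by linarith) hσ)
  have hgcont : Continuous g :=
    continuous_stdNormalCDF.comp ((continuous_id.sub continuous_const).div_const σ)
  have hΔ : 0 < g d - g c := sub_pos.mpr (hgmono hcd)
  have hIcc : ∀ {a b : ℝ}, a ≤ b → P (Set.Icc a b) = ENNReal.ofReal (g b - g a) :=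
    fun hab => gaussianReal_Icc μ σ hσ hab
  have hPcd : P (Set.Icc c d) = ENNReal.ofReal (g d - g c) := hIcc hcd.le
  have hne0 : P (Set.Icc c d) ≠ 0 := by
    rw [hPcd]; simp only [ne_eq, ENNReal.ofReal_eq_zero, not_le]; linarith
  have hFcont : Continuous F := by
    rw [hF]; exact (hgcont.sub continuous_const).div_const _
  have hFmeas : Measurable F := hFcont.measurable
  haveI : IsProbabilityMeasure (P[|Set.Icc c d]) := cond_isProbabilityMeasure hne0
  haveI : IsProbabilityMeasure (Measure.map F (P[|Set.Icc c d])) :=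
    Measure.isProbabilityMeasure_map hFmeas.aemeasurable
  refine Measure.ext_of_Iic _ _ fun t => ?_
  rw [Measure.map_apply hFmeas measurableSet_Iic, cond_apply measurableSet_Icc,
    Measure.restrict_apply measurableSet_Iic]
  have hFle : ∀ x t', (F x ≤ t' ↔ g x - g c ≤ t' * (g d - g c)) := by
    intro x t'
    rw [hF]
    exact div_le_iff₀ hΔ
  rcases lt_or_ge t 0 with ht0 | ht0
  · have h1 : Set.Icc c d ∩ F ⁻¹' Set.Iic t = ∅ := by
      ext x
      simp only [Set.mem_inter_iff, Set.mem_preimage, Set.mem_Iic, Set.mem_Icc,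
        Set.mem_empty_iff_false, iff_false, not_and, and_imp]
      intro hcx hxd hle
      have hgx : g c ≤ g x := hgmono.monotone hcx
      have := (hFle x t).mp hle
      nlinarith
    have h2 : Set.Iic t ∩ Set.Icc (0:ℝ) 1 = ∅ := by
      ext x
      simp only [Set.mem_inter_iff, Set.mem_Iic, Set.mem_Icc, Set.mem_empty_iff_false, iff_false,
        not_and, and_imp]
      intro h h0
      linarith
    rw [h1, h2]
    simp
  rcases le_or_gt 1 t with ht1 | ht1
  · have h1 : Set.Icc c d ∩ F ⁻¹' Set.Iic t = Set.Icc c d := by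
      refine Set.inter_eq_left.mpr fun x hx => ?_
      simp only [Set.mem_preimage, Set.mem_Iic]
      have hgx : g x ≤ g d := hgmono.monotone hx.2
      rw [hFle]
      nlinarith
    have h2 : Set.Iic t ∩ Set.Icc (0:ℝ) 1 = Set.Icc (0:ℝ) 1 := by
      refine Set.inter_eq_right.mpr fun x hx => ?_
      simp only [Set.mem_Iic]
      exact hx.2.trans ht1
    rw [h1, h2, ENNReal.inv_mul_cancel hne0 (measure_ne_top _ _)]
    simp [Real.volume_Icc]
  · -- 0 ≤ t < 1
    obtain ⟨s, hs, hgs⟩ := intermediate_value_Icc hcd.le hgcont.continuousOn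
      (Set.mem_Icc.mpr ⟨by nlinarith, by nlinarith⟩ :
        g c + t * (g d - g c) ∈ Set.Icc (g c) (g d))
    have h1 : Set.Icc c d ∩ F ⁻¹' Set.Iic t = Set.Icc c s := by
      ext x
      simp only [Set.mem_inter_iff, Set.mem_preimage, Set.mem_Iic, Set.mem_Icc]
      constructor
      · rintro ⟨⟨hcx, hxd⟩, hle⟩
        refine ⟨hcx, ?_⟩
        have := (hFle x t).mp hle
        have : g x ≤ g s := by rw [hgs]; linarith
        exact hgmono.le_iff_le.mp this
      · rintro ⟨hcx, hxs⟩
        have hgx : g x ≤ g s := hgmono.monotone hxs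
        refine ⟨⟨hcx, hxs.trans hs.2⟩, (hFle x t).mpr ?_⟩
        rw [hgs] at hgx
        linarith
    have h2 : Set.Iic t ∩ Set.Icc (0:ℝ) 1 = Set.Icc (0:ℝ) t := by
      ext x
      simp only [Set.mem_inter_iff, Set.mem_Iic, Set.mem_Icc]
      constructor
      · rintro ⟨hxt, hx0, _⟩; exact ⟨hx0, hxt⟩
      · rintro ⟨hx0, hxt⟩; exact ⟨hxt, hx0, by linarith⟩
    have hPcs : P (Set.Icc c s) = ENNReal.ofReal (t * (g d - g c)) := by
      rw [hIcc hs.1, hgs]; ring_nf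
    rw [h1, h2, hPcd, hPcs, ENNReal.ofReal_mul ht0, mul_comm (ENNReal.ofReal t),
      ← mul_assoc, ENNReal.inv_mul_cancel (by simp only [ne_eq, ENNReal.ofReal_eq_zero, not_le]; linarith)
        ENNReal.ofReal_ne_top, one_mul]
    simp [Real.volume_Icc]
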